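/- Let Γ' be a 2n×2n real matrix that is asymptotically stable with Γ' + Γ'ᵀ negative semidefinite, let α > 0, and let S be a real symplectic matrix (S·J·Sᵀ = J). Set Γ_p := S·Γ'·S⁻¹ and D_p := −α·S·(Γ' + Γ'ᵀ)·Sᵀ. Then Γ_p is asymptotically stable, D_p is positive semidefinite, and the unique solution of the Lyapunov equation Γ_p·V + V·Γ_pᵀ + D_p = 0 is V = α·S·Sᵀ. -/

import Mathlib

open NormedSpace Matrix Filter

namespace LyapAux

variable {m : Type*} [Fintype m] [DecidableEq m]

attribute [local instance] Matrix.linftyOpNormedRing Matrix.linftyOpNormedAlgebra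
  Matrix.linftyOpNormedAddCommGroup

/-- mulVec by a fixed vector, as a linear map in the matrix argument. -/
noncomputable def mulVecL (v : m → ℂ) : Matrix m m ℂ →ₗ[ℂ] (m → ℂ) where
  toFun A := A *ᵥ v
  map_add' A B := Matrix.add_mulVec A B v
  map_smul' c A := Matrix.smul_mulVec c A v

lemma algebraMap_mulVec (lam : ℂ) (v : m → ℂ) :
    (algebraMap ℂ (Matrix m m ℂ)) lam *ᵥ v = lam • v := by
  rw [Algebra.algebraMap_eq_smul_one, Matrix.smul_mulVec, Matrix.one_mulVec]

lemma exp_mulVec_eigenvector {M : Matrix m m ℂ} {lam : ℂ} {v : m → ℂ}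
    (hv : M *ᵥ v = lam • v) : exp M *ᵥ v = Complex.exp lam • v := by
  have hpow : ∀ k : ℕ, (M ^ k) *ᵥ v = lam ^ k • v := by
    intro k
    induction k with
    | zero => simp
    | succ k ih =>
      rw [pow_succ, ← Matrix.mulVec_mulVec, hv, Matrix.mulVec_smul, ih, smul_smul,
        mul_comm, ← pow_succ]
  have hsum := expSeries_summable' (𝕂 := ℂ) M
  have hsum' := expSeries_summable' (𝕂 := ℂ) lam
  have h1 : exp M *ᵥ v = (mulVecL v) (∑' n : ℕ, ((n.factorial : ℂ))⁻¹ • M ^ n) := by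
    rw [exp_eq_tsum ℂ]; rfl
  have h3 : (mulVecL v) (∑' n : ℕ, ((n.factorial : ℂ))⁻¹ • M ^ n)
      = ∑' n : ℕ, (mulVecL v) (((n.factorial : ℂ))⁻¹ • M ^ n) := by
    have := (LinearMap.toContinuousLinearMap (mulVecL v)).map_tsum hsum
    simpa using this
  have h2 : ∀ n : ℕ, (mulVecL v) (((n.factorial : ℂ))⁻¹ • M ^ n)
      = (((n.factorial : ℂ))⁻¹ • lam ^ n) • v := by
    intro n
    have hs : (mulVecL v) (((n.factorial : ℂ))⁻¹ • M ^ n)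
        = ((n.factorial : ℂ))⁻¹ • ((mulVecL v) (M ^ n)) := (mulVecL v).map_smul _ _
    have : (mulVecL v) (M ^ n) = lam ^ n • v := hpow n
    rw [hs, this, smul_smul, smul_eq_mul]
  have hfin : Complex.exp lam = ∑' n : ℕ, ((n.factorial : ℂ))⁻¹ • lam ^ n := by
    rw [Complex.exp_eq_exp_ℂ, exp_eq_tsum ℂ]
  rw [h1, h3, tsum_congr h2, hsum'.tsum_smul_const, ← hfin]

lemma mem_spectrum_of_eigen {A : Matrix m m ℂ} {lam : ℂ} {v : m → ℂ} (hv : v ≠ 0)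
    (h : A *ᵥ v = lam • v) : lam ∈ spectrum ℂ A := by
  rw [spectrum.mem_iff, Matrix.isUnit_iff_isUnit_det, isUnit_iff_ne_zero, not_not,
    ← Matrix.exists_mulVec_eq_zero_iff]
  exact ⟨v, hv, by rw [Matrix.sub_mulVec, h, algebraMap_mulVec, sub_self]⟩

lemma spectrum_exp_subset (M : Matrix m m ℂ) {μ : ℂ} (hμ : μ ∈ spectrum ℂ (exp M)) :
    ∃ lam ∈ spectrum ℂ M, μ = Complex.exp lam := by
  rw [spectrum.mem_iff, Matrix.isUnit_iff_isUnit_det, isUnit_iff_ne_zero, not_not,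
    ← Matrix.exists_mulVec_eq_zero_iff] at hμ
  obtain ⟨v, hv0, hv⟩ := hμ
  have hveig : exp M *ᵥ v = μ • v := by
    rw [Matrix.sub_mulVec, algebraMap_mulVec, sub_eq_zero] at hv
    exact hv.symm
  -- the eigenspace of `exp M` for `μ`, as a submodule
  set W := Module.End.eigenspace (Matrix.toLin' (exp M)) μ with hW
  have hvW : v ∈ W := by
    rw [hW, Module.End.mem_eigenspace_iff, Matrix.toLin'_apply, hveig]
  have hWnt : Nontrivial W := nontrivial_of_ne ⟨v, hvW⟩ 0 (by
    simp only [ne_eq, Submodule.mk_eq_zero]; exact hv0)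
  -- W is invariant under M
  have hinv : ∀ x ∈ W, (Matrix.toLin' M) x ∈ W := by
    intro x hx
    rw [hW, Module.End.mem_eigenspace_iff, Matrix.toLin'_apply] at hx ⊢
    have hcomm : exp M * M = M * exp M :=
      (((Commute.refl M).exp_left)).eq
    rw [Matrix.toLin'_apply, Matrix.mulVec_mulVec, hcomm, ← Matrix.mulVec_mulVec, hx,
      Matrix.mulVec_smul]
  set g : Module.End ℂ W := (Matrix.toLin' M).restrict hinv with hg
  obtain ⟨lam, hlam⟩ := Module.End.exists_eigenvalue g
  obtain ⟨w, hw⟩ := hlam.exists_hasEigenvector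
  have hweig : M *ᵥ (w : m → ℂ) = lam • (w : m → ℂ) := by
    have := hw.apply_eq_smul
    have h2 : ((g w : W) : m → ℂ) = (Matrix.toLin' M) (w : m → ℂ) := rfl
    rw [← Matrix.toLin'_apply, ← h2, this]
    rfl
  have hwne : (w : m → ℂ) ≠ 0 := by
    intro h
    exact hw.right (by exact_mod_cast Subtype.ext h)
  refine ⟨lam, mem_spectrum_of_eigen hwne hweig, ?_⟩
  have h1 : exp M *ᵥ (w : m → ℂ) = Complex.exp lam • (w : m → ℂ) :=
    exp_mulVec_eigenvector hweig
  have h2 : exp M *ᵥ (w : m → ℂ) = μ • (w : m → ℂ) := by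
    have hwW := Module.End.mem_eigenspace_iff.mp w.2
    rwa [Matrix.toLin'_apply] at hwW
  have := h1.symm.trans h2
  have hz : (μ - Complex.exp lam) • (w : m → ℂ) = 0 := by
    rw [sub_smul, this, sub_self]
  rcases smul_eq_zero.mp hz with h | h
  · exact sub_eq_zero.mp h
  · exact absurd h hwne

end LyapAux

namespace LyapAux
variable {m : Type*} [Fintype m] [DecidableEq m]
attribute [local instance] Matrix.linftyOpNormedRing Matrix.linftyOpNormedAlgebra
  Matrix.linftyOpNormedAddCommGroup

lemma spectralRadius_exp_lt_one {M : Matrix m m ℂ}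
    (hAS : ∀ μ ∈ spectrum ℂ M, μ.re < 0) : spectralRadius ℂ (exp M) < 1 := by
  have key : ∀ μ ∈ spectrum ℂ (exp M), (‖μ‖₊ : ENNReal) < 1 := by
    intro μ hμ
    obtain ⟨lam, hlam, rfl⟩ := spectrum_exp_subset M hμ
    have : ‖Complex.exp lam‖ < 1 := by
      rw [Complex.norm_exp]
      exact Real.exp_lt_one_iff.mpr (hAS lam hlam)
    rw [← ENNReal.coe_one, ENNReal.coe_lt_coe]
    exact this
  rcases (spectrum ℂ (exp M)).eq_empty_or_nonempty with h | h
  · rw [spectralRadius, h]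
    simp
  · have hfin := Matrix.finite_spectrum (exp M)
    have himg := hfin.image (fun μ => (‖μ‖₊ : ENNReal))
    have hsup := (h.image (fun μ => (‖μ‖₊ : ENNReal))).csSup_mem himg
    obtain ⟨μ₀, hμ₀, hval⟩ := hsup
    rw [spectralRadius, ← sSup_image, ← hval]
    exact key μ₀ hμ₀

lemma exists_pow_norm_le {a : Matrix m m ℂ} (h : spectralRadius ℂ a < 1) :
    ∃ (r C : ℝ), 0 < r ∧ r < 1 ∧ 0 < C ∧ ∀ k : ℕ, ‖a ^ k‖ ≤ C * r ^ k := by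
  obtain ⟨r'', hρ, hr1⟩ := exists_between h
  set r' : ENNReal := max r'' (1/2) with hr'
  have hr'1 : r' < 1 := max_lt hr1 (by norm_num)
  have hr'top : r' ≠ ⊤ := hr'1.ne_top
  have hr'0 : (0:ENNReal) < r' := lt_of_lt_of_le (by norm_num) (le_max_right _ _)
  set rr : ℝ := r'.toReal with hrr
  have hrr0 : 0 < rr := ENNReal.toReal_pos hr'0.ne' hr'top
  have hrr1 : rr < 1 := by
    rw [hrr, ← ENNReal.toReal_one]
    exact ENNReal.toReal_strict_mono (by norm_num) hr'1
  have hev : ∀ᶠ k : ℕ in Filter.atTop, (‖a ^ k‖₊ : ENNReal) ^ (1 / (k:ℝ)) < r'' :=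
    (spectrum.pow_nnnorm_pow_one_div_tendsto_nhds_spectralRadius a).eventually_lt_const hρ
  obtain ⟨K, hK⟩ := (hev.and (Filter.eventually_ge_atTop 1)).exists_forall_of_atTop
  have hKbound : ∀ k, K ≤ k → ‖a ^ k‖ ≤ rr ^ k := by
    intro k hk
    obtain ⟨h1, h2⟩ := hK k hk
    have hk0 : (k:ℝ) ≠ 0 := Nat.cast_ne_zero.mpr (by omega)
    have h3 : (‖a ^ k‖₊ : ENNReal) ≤ r'' ^ (k:ℝ) := by
      have := ENNReal.rpow_le_rpow h1.le (Nat.cast_nonneg k)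
      rwa [← ENNReal.rpow_mul, one_div, inv_mul_cancel₀ hk0, ENNReal.rpow_one] at this
    have h4 : (‖a ^ k‖₊ : ENNReal) ≤ r' ^ (k:ℝ) :=
      h3.trans (ENNReal.rpow_le_rpow (le_max_left _ _) (Nat.cast_nonneg k))
    have htop : r' ^ (k:ℝ) ≠ ⊤ := ENNReal.rpow_ne_top_of_nonneg (Nat.cast_nonneg k) hr'top
    have h5 := ENNReal.toReal_mono htop h4
    rwa [ENNReal.coe_toReal, coe_nnnorm, ← ENNReal.toReal_rpow, Real.rpow_natCast] at h5
  set C : ℝ := 1 + ∑ i ∈ Finset.range (K+1), ‖a ^ i‖ / rr ^ i with hC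
  have hsumnn : 0 ≤ ∑ i ∈ Finset.range (K+1), ‖a ^ i‖ / rr ^ i :=
    Finset.sum_nonneg fun i _ => div_nonneg (norm_nonneg _) (pow_nonneg hrr0.le i)
  have hC1 : 1 ≤ C := le_add_of_nonneg_right hsumnn
  refine ⟨rr, C, hrr0, hrr1, lt_of_lt_of_le one_pos hC1, fun k => ?_⟩
  by_cases hk : K ≤ k
  · exact (hKbound k hk).trans (le_mul_of_one_le_left (pow_nonneg hrr0.le k) hC1)
  · push_neg at hk
    have hmem : k ∈ Finset.range (K+1) := Finset.mem_range.mpr (by omega)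
    have hle : ‖a ^ k‖ / rr ^ k ≤ ∑ i ∈ Finset.range (K+1), ‖a ^ i‖ / rr ^ i :=
      Finset.single_le_sum (fun i _ => div_nonneg (norm_nonneg _) (pow_nonneg hrr0.le i)) hmem
    have := hle.trans (le_add_of_nonneg_left zero_le_one)
    calc ‖a ^ k‖ = (‖a ^ k‖ / rr ^ k) * rr ^ k := by
          field_simp
      _ ≤ C * rr ^ k := mul_le_mul_of_nonneg_right (by rw [hC]; linarith) (pow_nonneg hrr0.le k)

lemma norm_exp_tsmul_decay {M : Matrix m m ℂ}
    (hAS : ∀ μ ∈ spectrum ℂ M, μ.re < 0) :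
    ∃ C c : ℝ, 0 < c ∧ 0 ≤ C ∧ ∀ t : ℝ, 0 ≤ t → ‖exp (t • M)‖ ≤ C * Real.exp (-c * t) := by
  obtain ⟨r, C₀, hr0, hr1, hC₀, hpow⟩ := exists_pow_norm_le (spectralRadius_exp_lt_one hAS)
  have hEE : (exp : Matrix m m ℂ → Matrix m m ℂ) = exp := rfl
  have hcont : Continuous fun s : ℝ => exp (s • M) :=
    continuous_iff_continuousAt.mpr fun s => by
      have := (hasDerivAt_exp_smul_const (𝕂 := ℝ) M s).continuousAt
      exact this
  obtain ⟨B, hB⟩ := (isCompact_Icc (a := (0:ℝ)) (b := 1)).exists_bound_of_continuousOn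
    hcont.continuousOn
  have hB0 : 0 ≤ B := le_trans (norm_nonneg _) (hB 0 ⟨le_refl _, zero_le_one⟩)
  set c : ℝ := -Real.log r with hc
  have hc0 : 0 < c := by
    rw [hc, neg_pos]
    exact Real.log_neg hr0 hr1
  refine ⟨C₀ * B * Real.exp c, c, hc0, by positivity, fun t ht => ?_⟩
  set k : ℕ := ⌊t⌋₊ with hk
  have hkt : (k:ℝ) ≤ t := Nat.floor_le ht
  have htk : t < k + 1 := Nat.lt_floor_add_one t
  have hsplit : t • M = (k:ℝ) • M + (t - k) • M := by
    rw [← add_smul]; ring_nf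
  have hcomm : Commute ((k:ℝ) • M) ((t - k) • M) :=
    ((Commute.refl M).smul_left _).smul_right _
  have hexp : exp (t • M) = exp M ^ k * exp ((t - k) • M) := by
    rw [hsplit, Matrix.exp_add_of_commute _ _ hcomm]
    congr 1
    rw [Nat.cast_smul_eq_nsmul ℝ k M, Matrix.exp_nsmul]
  have h1 : ‖exp ((t - k) • M)‖ ≤ B := hB _ ⟨by linarith, by linarith⟩
  have h2 : ‖exp (t • M)‖ ≤ C₀ * r ^ k * B := by
    rw [hexp]
    calc ‖exp M ^ k * exp ((t - k) • M)‖
        ≤ ‖exp M ^ k‖ * ‖exp ((t - k) • M)‖ := norm_mul_le _ _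
      _ ≤ (C₀ * r ^ k) * B :=
          mul_le_mul (hpow k) h1 (norm_nonneg _) (by positivity)
  have h3 : r ^ k ≤ Real.exp c * Real.exp (-c * t) := by
    have hrk : r ^ k = Real.exp ((k:ℝ) * Real.log r) := by
      rw [Real.exp_nat_mul, Real.exp_log hr0]
    have hle : (k:ℝ) * Real.log r ≤ (t - 1) * Real.log r :=
      mul_le_mul_of_nonpos_right (by linarith) (Real.log_nonpos hr0.le hr1.le)
    calc r ^ k = Real.exp ((k:ℝ) * Real.log r) := hrk
      _ ≤ Real.exp ((t - 1) * Real.log r) := Real.exp_le_exp.mpr hle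
      _ = Real.exp c * Real.exp (-c * t) := by
          rw [← Real.exp_add, hc]; ring_nf
  calc ‖exp (t • M)‖ ≤ C₀ * r ^ k * B := h2
    _ ≤ C₀ * (Real.exp c * Real.exp (-c * t)) * B := by
        apply mul_le_mul_of_nonneg_right _ hB0
        exact mul_le_mul_of_nonneg_left h3 hC₀.le
    _ = C₀ * B * Real.exp c * Real.exp (-c * t) := by ring

lemma entry_norm_le_linfty (A : Matrix m m ℂ) (i j : m) : ‖A i j‖ ≤ ‖A‖ := by
  have h1 : ‖A i j‖₊ ≤ ∑ j' : m, ‖A i j'‖₊ :=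
    Finset.single_le_sum (f := fun j' => ‖A i j'‖₊) (fun j' _ => zero_le) (Finset.mem_univ j)
  have h2 : (∑ j' : m, ‖A i j'‖₊) ≤ ‖A‖₊ := by
    rw [Matrix.linfty_opNNNorm_def]
    exact Finset.le_sup (f := fun i => ∑ j' : m, ‖A i j'‖₊) (Finset.mem_univ i)
  exact_mod_cast h1.trans h2

lemma exp_map_ofReal (A : Matrix m m ℝ) :
    (exp A).map Complex.ofReal = exp (A.map Complex.ofReal) := by
  have hcont : Continuous fun B : Matrix m m ℝ => B.map Complex.ofReal :=
    continuous_id.matrix_map Complex.continuous_ofReal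
  have h := map_exp (Complex.ofRealAm.mapMatrix (m := m)) (by
    exact hcont) A
  simp [AlgHom.mapMatrix_apply] at h
  exact h

lemma exp_real_entry_decay {M : Matrix m m ℝ}
    (hAS : ∀ μ ∈ spectrum ℂ (M.map Complex.ofReal), μ.re < 0) :
    ∃ C c : ℝ, 0 < c ∧ 0 ≤ C ∧ ∀ t : ℝ, 0 ≤ t → ∀ i j,
      |exp (t • M) i j| ≤ C * Real.exp (-c * t) := by
  obtain ⟨C, c, hc, hC, hbd⟩ := norm_exp_tsmul_decay hAS
  refine ⟨C, c, hc, hC, fun t ht i j => ?_⟩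
  have hmap : (exp (t • M)).map Complex.ofReal = exp (t • M.map Complex.ofReal) := by
    rw [exp_map_ofReal]
    congr 1
    ext i' j'
    simp [Matrix.map_apply, Complex.real_smul]
  have h1 : |exp (t • M) i j| = ‖(exp (t • M.map Complex.ofReal)) i j‖ := by
    rw [← hmap]
    simp [Matrix.map_apply, Complex.norm_real]
  rw [h1]
  exact (entry_norm_le_linfty _ i j).trans (hbd t ht)

end LyapAux


-- complex conjugation-invariance of spectrum (no norms involved)
namespace LyapAux
variable {m : Type*} [Fintype m] [DecidableEq m]

lemma spectrum_conj {A P Q : Matrix m m ℂ} (hPQ : P * Q = 1) (hQP : Q * P = 1) :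
    spectrum ℂ (P * A * Q) = spectrum ℂ A := by
  have hP : IsUnit P := by
    rw [Matrix.isUnit_iff_isUnit_det]
    exact Matrix.isUnit_det_of_right_inverse hPQ
  have hQ : IsUnit Q := by
    rw [Matrix.isUnit_iff_isUnit_det]
    exact Matrix.isUnit_det_of_right_inverse hQP
  ext μ
  rw [spectrum.mem_iff, spectrum.mem_iff, not_iff_not]
  have key : (algebraMap ℂ (Matrix m m ℂ)) μ - P * A * Q
      = P * ((algebraMap ℂ (Matrix m m ℂ)) μ - A) * Q := by
    rw [Matrix.mul_sub, Matrix.sub_mul, Algebra.algebraMap_eq_smul_one]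
    rw [Matrix.mul_smul, mul_one, Matrix.smul_mul, hPQ]
  rw [key]
  constructor
  · intro h
    have heq : Q * (P * ((algebraMap ℂ (Matrix m m ℂ)) μ - A) * Q) * P
        = (algebraMap ℂ (Matrix m m ℂ)) μ - A := by
      rw [show Q * (P * ((algebraMap ℂ (Matrix m m ℂ)) μ - A) * Q) * P
          = (Q * P) * ((algebraMap ℂ (Matrix m m ℂ)) μ - A) * (Q * P) by
            simp only [mul_assoc],
        hQP, one_mul, mul_one]
    rw [← heq]
    exact (hQ.mul h).mul hP
  · intro h
    exact (hP.mul h).mul hQ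

end LyapAux

namespace LyapAux
variable {m : Type*} [Fintype m] [DecidableEq m]
attribute [local instance] Matrix.linftyOpNormedRing Matrix.linftyOpNormedAlgebra
  Matrix.linftyOpNormedAddCommGroup

/-- entry evaluation as a linear map -/
noncomputable def entryL (i j : m) : Matrix m m ℝ →ₗ[ℝ] ℝ where
  toFun A := A i j
  map_add' A B := rfl
  map_smul' c A := rfl

lemma hasDerivAt_exp_entry (A : Matrix m m ℝ) (t : ℝ) (i j : m) :
    HasDerivAt (fun s : ℝ => exp (s • A) i j) ((exp (t • A) * A) i j) t := by
  have h := hasDerivAt_exp_smul_const (𝕂 := ℝ) A t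
  have hL := (LinearMap.toContinuousLinearMap (entryL i j)).hasFDerivAt
    (x := exp (t • A))
  have := hL.comp_hasDerivAt t h
  exact this

lemma exp_smul_comm (A : Matrix m m ℝ) (t : ℝ) :
    exp (t • A) * A = A * exp (t • A) :=
  (((Commute.refl A).smul_left t).exp_left).eq

lemma exp_continuous_real (A : Matrix m m ℝ) :
    Continuous fun s : ℝ => exp (s • A) :=
  continuous_iff_continuousAt.mpr fun s => (hasDerivAt_exp_smul_const (𝕂 := ℝ) A s).continuousAt

end LyapAux



open MeasureTheory NormedSpace Matrix

attribute [local instance] Matrix.normedAddCommGroup Matrix.normedSpace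

/-- The `2n × 2n` standard symplectic form `J = [[0, Iₙ], [−Iₙ, 0]]`. -/
noncomputable def symplecticJ (n : ℕ) : Matrix (Fin n ⊕ Fin n) (Fin n ⊕ Fin n) ℝ :=
  Matrix.fromBlocks 0 1 (-1) 0

/-- A square real matrix is asymptotically stable if every eigenvalue (over `ℂ`) has
strictly negative real part. -/
def IsAsymptoticallyStable {m : Type*} [Fintype m] [DecidableEq m]
    (Γ : Matrix m m ℝ) : Prop :=
  ∀ μ ∈ spectrum ℂ (Γ.map Complex.ofReal), μ.re < 0

namespace LyapAux

variable {m : Type*} [Fintype m] [DecidableEq m]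

/-- entry evaluation as a linear map, in the pi-norm world -/
noncomputable def entryL' (i j : m) : Matrix m m ℝ →ₗ[ℝ] ℝ where
  toFun A := A i j
  map_add' _ _ := rfl
  map_smul' _ _ := rfl

lemma hasDerivAt_entry {f : ℝ → Matrix m m ℝ} {f' : Matrix m m ℝ} {t : ℝ}
    (h : HasDerivAt f f' t) (i j : m) :
    HasDerivAt (fun s => f s i j) (f' i j) t := by
  have hL := (LinearMap.toContinuousLinearMap (entryL' i j)).hasFDerivAt (x := f t)
  exact hL.comp_hasDerivAt t h

lemma hasDerivAt_matrix {f : ℝ → Matrix m m ℝ} {f' : Matrix m m ℝ} {t : ℝ}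
    (h : ∀ i j, HasDerivAt (fun s => f s i j) (f' i j) t) : HasDerivAt f f' t := by
  have key : ∀ (i : m) (j : m), HasDerivAt (fun s => Matrix.single i j (f s i j))
      (Matrix.single i j (f' i j)) t := by
    intro i j
    have := (h i j).smul_const (Matrix.single i j (1:ℝ))
    simp [Matrix.smul_single] at this
    exact this
  have hsum : HasDerivAt (fun s => ∑ i : m, ∑ j : m, Matrix.single i j (f s i j))
      (∑ i : m, ∑ j : m, Matrix.single i j (f' i j)) t :=
    HasDerivAt.fun_sum fun i _ => HasDerivAt.fun_sum fun j _ => key i j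
  have hcongr := hsum.congr_of_eventuallyEq
    (Filter.Eventually.of_forall fun s => Matrix.matrix_eq_sum_single (f s))
  rw [show f' = ∑ i : m, ∑ j : m, Matrix.single i j (f' i j) from
    Matrix.matrix_eq_sum_single f']
  exact hcongr

lemma hasDerivAt_matrix_mul {f g : ℝ → Matrix m m ℝ} {f' g' : Matrix m m ℝ} {t : ℝ}
    (hf : ∀ i j, HasDerivAt (fun s => f s i j) (f' i j) t)
    (hg : ∀ i j, HasDerivAt (fun s => g s i j) (g' i j) t) (i j : m) :
    HasDerivAt (fun s => (f s * g s) i j) ((f' * g t + f t * g') i j) t := by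
  have hsum : HasDerivAt (fun s => ∑ k : m, f s i k * g s k j)
      (∑ k : m, (f' i k * g t k j + f t i k * g' k j)) t :=
    HasDerivAt.fun_sum fun k _ => (hf i k).mul (hg k j)
  simpa [Matrix.mul_apply, Matrix.add_apply, Finset.sum_add_distrib] using hsum

lemma triple_entry_bound {A B C : Matrix m m ℝ} {a b : ℝ} (ha0 : 0 ≤ a) (hb0 : 0 ≤ b)
    (ha : ∀ i j, |A i j| ≤ a) (hb : ∀ i j, |C i j| ≤ b) (i j : m) :
    |(A * B * C) i j| ≤ a * (∑ k : m, ∑ l : m, |B k l|) * b := by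
  have hrw : (A * B * C) i j = ∑ l : m, ∑ k : m, A i k * B k l * C l j := by
    simp only [Matrix.mul_apply, Finset.sum_mul]
  rw [hrw]
  calc |∑ l : m, ∑ k : m, A i k * B k l * C l j|
      ≤ ∑ l : m, ∑ k : m, |A i k * B k l * C l j| := by
        refine (Finset.abs_sum_le_sum_abs _ _).trans ?_
        exact Finset.sum_le_sum fun l _ => Finset.abs_sum_le_sum_abs _ _
    _ ≤ ∑ l : m, ∑ k : m, a * |B k l| * b := by
        refine Finset.sum_le_sum fun l _ => Finset.sum_le_sum fun k _ => ?_
        rw [abs_mul, abs_mul]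
        have h1 : |A i k| * |B k l| ≤ a * |B k l| :=
          mul_le_mul_of_nonneg_right (ha i k) (abs_nonneg _)
        exact mul_le_mul h1 (hb l j) (abs_nonneg _) (by positivity)
    _ = a * (∑ k : m, ∑ l : m, |B k l|) * b := by
        rw [Finset.sum_comm]
        rw [Finset.mul_sum, Finset.sum_mul]
        congr 1
        ext k
        rw [Finset.mul_sum, Finset.sum_mul]

lemma posSemidef_smul {A : Matrix m m ℝ} (h : A.PosSemidef) {α : ℝ} (hα : 0 ≤ α) :
    (α • A).PosSemidef := by
  constructor
  · have := h.1
    unfold Matrix.IsHermitian at this ⊢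
    rw [Matrix.conjTranspose_smul, this]
    simp [star_trivial]
  · exact (h.smul hα).2

end LyapAux

/-- For `Γ'` asymptotically stable with `Γ' + Γ'ᵀ ≤ 0`, `α > 0`, and `S` symplectic,
the matrices `Γₚ = S Γ' S⁻¹` and `Dₚ = −α S (Γ' + Γ'ᵀ) Sᵀ` satisfy: `Γₚ` is
asymptotically stable, `Dₚ` is positive semidefinite, and the unique solution of the
Lyapunov equation `Γₚ V + V Γₚᵀ + Dₚ = 0` is `V = α S Sᵀ`. -/
theorem engineered_lyapunov_solution (n : ℕ)
    (Γ' S : Matrix (Fin n ⊕ Fin n) (Fin n ⊕ Fin n) ℝ) (α : ℝ)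
    (hΓ' : IsAsymptoticallyStable Γ') (hneg : (-(Γ' + Γ'ᵀ)).PosSemidef) (hα : 0 < α)
    (hS : S * symplecticJ n * Sᵀ = symplecticJ n) :
    IsAsymptoticallyStable (S * Γ' * S⁻¹) ∧
      (-α • (S * (Γ' + Γ'ᵀ) * Sᵀ)).PosSemidef ∧
      (∫ t in Set.Ici (0 : ℝ),
          exp (t • (S * Γ' * S⁻¹)) * (-α • (S * (Γ' + Γ'ᵀ) * Sᵀ)) *
            exp (t • (S * Γ' * S⁻¹)ᵀ)) = α • (S * Sᵀ) := by
  classical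
  have hJJ : symplecticJ n * symplecticJ n = -1 := by
    rw [show (-1 : Matrix (Fin n ⊕ Fin n) (Fin n ⊕ Fin n) ℝ)
      = Matrix.fromBlocks (-1) 0 0 (-1) by
        rw [← Matrix.fromBlocks_one, Matrix.fromBlocks_neg]; simp]
    simp [symplecticJ, Matrix.fromBlocks_multiply]
  have hdJ : IsUnit (symplecticJ n).det :=
    Matrix.isUnit_det_of_right_inverse (B := -symplecticJ n)
      (by rw [Matrix.mul_neg, hJJ, neg_neg])
  have hdetS2 : S.det * S.det = 1 := by
    have h := congrArg Matrix.det hS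
    rw [Matrix.det_mul, Matrix.det_mul, Matrix.det_transpose] at h
    have hd0 : (symplecticJ n).det ≠ 0 := hdJ.ne_zero
    have h2 : (S.det * S.det) * (symplecticJ n).det = 1 * (symplecticJ n).det := by
      rw [one_mul]; linear_combination h
    exact mul_right_cancel₀ hd0 h2
  have hdetS : IsUnit S.det := IsUnit.of_mul_eq_one _ hdetS2
  have hSS : S * S⁻¹ = 1 := Matrix.mul_nonsing_inv S hdetS
  have hS'S : S⁻¹ * S = 1 := Matrix.nonsing_inv_mul S hdetS
  have hmap_mul : ∀ A B : Matrix (Fin n ⊕ Fin n) (Fin n ⊕ Fin n) ℝ,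
      (A * B).map Complex.ofReal = A.map Complex.ofReal * B.map Complex.ofReal := by
    intro A B; ext i j
    simp [Matrix.mul_apply, Matrix.map_apply]
  have hmap_one : (1 : Matrix (Fin n ⊕ Fin n) (Fin n ⊕ Fin n) ℝ).map Complex.ofReal = 1 := by
    ext i j
    by_cases h : i = j <;> simp [Matrix.map_apply, Matrix.one_apply, h]
  have hpart1 : IsAsymptoticallyStable (S * Γ' * S⁻¹) := by
    intro μ hμ
    rw [hmap_mul, hmap_mul] at hμ
    have hPQ : S.map Complex.ofReal * (S⁻¹).map Complex.ofReal = 1 := by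
      rw [← hmap_mul, hSS, hmap_one]
    have hQP : (S⁻¹).map Complex.ofReal * S.map Complex.ofReal = 1 := by
      rw [← hmap_mul, hS'S, hmap_one]
    rw [LyapAux.spectrum_conj hPQ hQP] at hμ
    exact hΓ' μ hμ
  have hpart2 : (-α • (S * (Γ' + Γ'ᵀ) * Sᵀ)).PosSemidef := by
    have h1 : -α • (S * (Γ' + Γ'ᵀ) * Sᵀ) = α • (S * (-(Γ' + Γ'ᵀ)) * Sᵀ) := by
      rw [Matrix.mul_neg, Matrix.neg_mul, smul_neg, neg_smul]
    rw [h1]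
    have h2 := hneg.mul_mul_conjTranspose_same S
    rw [Matrix.conjTranspose_eq_transpose_of_trivial] at h2
    exact LyapAux.posSemidef_smul h2 hα.le
  refine ⟨hpart1, hpart2, ?_⟩
  set Γp := S * Γ' * S⁻¹ with hΓp
  set D := -α • (S * (Γ' + Γ'ᵀ) * Sᵀ) with hD
  set V := α • (S * Sᵀ) with hV
  obtain ⟨C, c, hc, hC, hdecay⟩ := LyapAux.exp_real_entry_decay (M := Γp) hpart1
  have hEt : ∀ s : ℝ, exp (s • Γpᵀ) = (exp (s • Γp))ᵀ := fun s => by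
    rw [← Matrix.transpose_smul, Matrix.exp_transpose]
  -- the Lyapunov algebra
  have hlyap : Γp * V + V * Γpᵀ = -D := by
    have hSt : Sᵀ * (S⁻¹)ᵀ = 1 := by
      rw [← Matrix.transpose_mul, hS'S, Matrix.transpose_one]
    have hmid : S⁻¹ * (S * Sᵀ) = Sᵀ := by rw [← Matrix.mul_assoc, hS'S, one_mul]
    have e1 : Γp * V = α • (S * (Γ' * Sᵀ)) := by
      rw [hΓp, hV, Matrix.mul_smul]
      congr 1
      simp only [Matrix.mul_assoc, hmid]
    have hmid2 : Sᵀ * ((S⁻¹)ᵀ * (Γ'ᵀ * Sᵀ)) = Γ'ᵀ * Sᵀ := by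
      rw [← Matrix.mul_assoc, hSt, one_mul]
    have e2 : V * Γpᵀ = α • (S * (Γ'ᵀ * Sᵀ)) := by
      rw [hV, hΓp, Matrix.smul_mul]
      congr 1
      rw [Matrix.transpose_mul, Matrix.transpose_mul]
      simp only [Matrix.mul_assoc, hmid2]
    have e3 : S * (Γ' * Sᵀ) + S * (Γ'ᵀ * Sᵀ) = S * (Γ' + Γ'ᵀ) * Sᵀ := by
      rw [← Matrix.mul_add, ← Matrix.add_mul, Matrix.mul_assoc]
    rw [e1, e2, ← smul_add, e3, hD, neg_smul, neg_neg]
  -- entrywise derivatives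
  have hEderiv : ∀ t : ℝ, ∀ i j, HasDerivAt (fun s : ℝ => exp (s • Γp) i j)
      ((exp (t • Γp) * Γp) i j) t := fun t => LyapAux.hasDerivAt_exp_entry Γp t
  have hEtderiv : ∀ t : ℝ, ∀ i j, HasDerivAt (fun s : ℝ => exp (s • Γpᵀ) i j)
      ((exp (t • Γpᵀ) * Γpᵀ) i j) t := fun t => LyapAux.hasDerivAt_exp_entry Γpᵀ t
  set G : ℝ → Matrix (Fin n ⊕ Fin n) (Fin n ⊕ Fin n) ℝ :=
    fun s => exp (s • Γp) * V * exp (s • Γpᵀ) with hG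
  have hGd : ∀ t : ℝ, HasDerivAt G (exp (t • Γp) * (-D) * exp (t • Γpᵀ)) t := by
    intro t
    apply LyapAux.hasDerivAt_matrix
    intro i j
    have step1 : ∀ i j, HasDerivAt (fun s : ℝ => (exp (s • Γp) * V) i j)
        ((exp (t • Γp) * Γp * V) i j) t := by
      intro i j
      have h0 := LyapAux.hasDerivAt_matrix_mul (f := fun s : ℝ => exp (s • Γp))
        (g := fun _ : ℝ => V) (f' := exp (t • Γp) * Γp) (g' := 0) (t := t)
        (hEderiv t) (fun i j => hasDerivAt_const t (V i j)) i j
      simpa using h0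
    have step2 := LyapAux.hasDerivAt_matrix_mul (f := fun s : ℝ => exp (s • Γp) * V)
      (g := fun s : ℝ => exp (s • Γpᵀ)) (f' := exp (t • Γp) * Γp * V)
      (g' := exp (t • Γpᵀ) * Γpᵀ) (t := t) step1 (hEtderiv t) i j
    have halg : exp (t • Γp) * Γp * V * exp (t • Γpᵀ)
        + (exp (t • Γp) * V) * (exp (t • Γpᵀ) * Γpᵀ)
        = exp (t • Γp) * (-D) * exp (t • Γpᵀ) := by
      rw [LyapAux.exp_smul_comm Γpᵀ t, ← hlyap]
      simp only [Matrix.mul_add, Matrix.add_mul, Matrix.mul_assoc]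
    rw [← halg]
    exact step2
  -- continuity
  have hcontE := LyapAux.exp_continuous_real Γp
  have hcontEt := LyapAux.exp_continuous_real Γpᵀ
  have hcontG : Continuous G := (hcontE.matrix_mul continuous_const).matrix_mul hcontEt
  set f : ℝ → Matrix (Fin n ⊕ Fin n) (Fin n ⊕ Fin n) ℝ :=
    fun t => exp (t • Γp) * D * exp (t • Γpᵀ) with hf
  have hgf : ∀ t : ℝ, exp (t • Γp) * (-D) * exp (t • Γpᵀ) = -(f t) := by
    intro t
    rw [hf]
    simp [Matrix.mul_neg, Matrix.neg_mul]
  -- decay of transposed exponential entries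
  have hdecayT : ∀ t : ℝ, 0 ≤ t → ∀ i j, |exp (t • Γpᵀ) i j| ≤ C * Real.exp (-c * t) := by
    intro t ht i j
    rw [hEt t]
    exact hdecay t ht j i
  -- norm bounds
  have hGbound : ∀ t : ℝ, 0 ≤ t → ‖G t‖ ≤
      (C * (∑ k, ∑ l, |V k l|) * C) * Real.exp (-(2*c) * t) := by
    intro t ht
    have hb : (0:ℝ) ≤ C * Real.exp (-c * t) := by positivity
    rw [Matrix.norm_le_iff (by positivity)]
    intro i j
    have := LyapAux.triple_entry_bound (B := V) hb hb (hdecay t ht) (hdecayT t ht) i j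
    refine this.trans (le_of_eq ?_)
    rw [show -(2*c) * t = -c * t + -c * t by ring, Real.exp_add]
    ring
  have hfbound : ∀ t : ℝ, 0 ≤ t → ‖f t‖ ≤
      (C * (∑ k, ∑ l, |D k l|) * C) * Real.exp (-(2*c) * t) := by
    intro t ht
    have hb : (0:ℝ) ≤ C * Real.exp (-c * t) := by positivity
    rw [Matrix.norm_le_iff (by positivity)]
    intro i j
    have := LyapAux.triple_entry_bound (B := D) hb hb (hdecay t ht) (hdecayT t ht) i j
    refine this.trans (le_of_eq ?_)
    rw [show -(2*c) * t = -c * t + -c * t by ring, Real.exp_add]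
    ring
  have hexp2 : Filter.Tendsto (fun t : ℝ => Real.exp (-(2*c) * t)) Filter.atTop (nhds 0) := by
    have h1 : Filter.Tendsto (fun t : ℝ => (2*c) * t) Filter.atTop Filter.atTop :=
      Filter.Tendsto.const_mul_atTop (by positivity) Filter.tendsto_id
    have h2 : Filter.Tendsto (fun t : ℝ => -(2*c) * t) Filter.atTop Filter.atBot := by
      have h3 := tendsto_neg_atTop_atBot.comp h1
      have he : (fun t : ℝ => -(2*c) * t) = (Neg.neg ∘ fun t : ℝ => (2*c) * t) := by
        funext t; simp [neg_mul]
      rw [he]; exact h3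
    exact Real.tendsto_exp_atBot.comp h2
  have htend : Filter.Tendsto G Filter.atTop (nhds 0) := by
    apply squeeze_zero_norm' (a := fun t => (C * (∑ k, ∑ l, |V k l|) * C) * Real.exp (-(2*c) * t))
    · filter_upwards [Filter.eventually_ge_atTop (0:ℝ)] with t ht
      exact hGbound t ht
    · have := hexp2.const_mul (C * (∑ k, ∑ l, |V k l|) * C)
      simpa using this
  have hint : (letI : TopologicalSpace (Matrix (Fin n ⊕ Fin n) (Fin n ⊕ Fin n) ℝ) :=
      PseudoMetricSpace.toUniformSpace.toTopologicalSpace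
    MeasureTheory.IntegrableOn (fun t => -(f t)) (Set.Ioi (0:ℝ))) := by
    have hcontf : Continuous f := (hcontE.matrix_mul continuous_const).matrix_mul hcontEt
    apply MeasureTheory.Integrable.mono'
      (g := fun t => (C * (∑ k, ∑ l, |D k l|) * C) * Real.exp (-(2*c) * t))
    · exact (exp_neg_integrableOn_Ioi 0 (by positivity : (0:ℝ) < 2*c)).const_mul _
    · have hcontf' : (letI : TopologicalSpace (Matrix (Fin n ⊕ Fin n) (Fin n ⊕ Fin n) ℝ) :=
          PseudoMetricSpace.toUniformSpace.toTopologicalSpace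
        Continuous f) := hcontf
      exact (hcontf'.neg.aestronglyMeasurable).restrict
    · rw [MeasureTheory.ae_restrict_iff' measurableSet_Ioi]
      filter_upwards with t ht
      rw [norm_neg]
      exact hfbound t (le_of_lt ht)
  have hG0 : G 0 = V := by
    rw [hG]
    simp
  have hFTC := MeasureTheory.integral_Ioi_of_hasDerivAt_of_tendsto
    (f := G) (f' := fun t => -(f t)) (a := 0) (m := 0)
    hcontG.continuousWithinAt
    (fun x _ => by have h := hGd x; rw [hgf x] at h; exact h)
    hint htend
  rw [hG0] at hFTC
  rw [MeasureTheory.integral_Ici_eq_integral_Ioi]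
  have hneg' : (∫ t in Set.Ioi (0:ℝ), f t) = -∫ t in Set.Ioi (0:ℝ), -(f t) := by
    rw [MeasureTheory.integral_neg, neg_neg]
  rw [hneg', hFTC, zero_sub, neg_neg]
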